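/- Let U ⊆ ℝ^d be open and F, G : U × [0,∞) → ℝ be respectively upper and lower semicontinuous. Assume there is C > 0 such that F(x,t) ≤ Ct and G(x,t) ≥ −Ct for all (x,t), and that min(F_t, F) ≤ 0 and max(G_t, G) ≥ 0 hold in the viscosity sense on U × (0,∞). Then F ≤ 0 and G ≥ 0 on all of U × [0,∞). -/

import Mathlib

open Real MeasureTheory Filter Topology

noncomputable section

abbrev Spc (d : ℕ) := EuclideanSpace ℝ (Fin d)

/-- The point of `ℝ^d` with integer coordinates `k`. -/
def latticePt (d : ℕ) (k : Fin d → ℤ) : Spc d :=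
  (WithLp.equiv 2 (Fin d → ℝ)).symm (fun i => (k i : ℝ))

/-- `φ : ℝ^d → ℝ` is 1-periodic. -/
def Per1 {d : ℕ} (φ : Spc d → ℝ) : Prop :=
  ∀ (x : Spc d) (k : Fin d → ℤ), φ (x + latticePt d k) = φ x

/-- The nonlocal operator `L^α`, in the symmetrized sense. -/
def Lop {d : ℕ} (K : Spc d → Spc d → ℝ) (u : Spc d → ℝ) (x : Spc d) : ℝ :=
  (1 / 2) * ∫ y : Spc d, (2 * u x - u (x + y) - u (x - y)) * K x y

/-- An admissible kernel of order `α` with constant `CK`. -/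
structure AdmissibleKernel (d : ℕ) (α CK : ℝ) (K : Spc d → Spc d → ℝ) : Prop where
  pos : ∀ x y, 0 < K x y
  per : ∀ y, Per1 fun x => K x y
  smooth : ∀ y, ContDiff ℝ 2 fun x => K x y
  symm : ∀ x y, K x y = K x (-y)
  CK_pos : 0 < CK
  bndK : ∀ (x y : Spc d), y ≠ 0 →
    CK⁻¹ ≤ K x y * ‖y‖ ^ ((d : ℝ) + α) ∧ K x y * ‖y‖ ^ ((d : ℝ) + α) ≤ CK
  bndDK : ∀ (x y : Spc d), y ≠ 0 →
    CK⁻¹ ≤ ‖fderiv ℝ (fun z => K z y) x‖ * ‖y‖ ^ ((d : ℝ) + α) ∧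
      ‖fderiv ℝ (fun z => K z y) x‖ * ‖y‖ ^ ((d : ℝ) + α) ≤ CK
  bndD2K : ∀ (x y : Spc d), y ≠ 0 →
    CK⁻¹ ≤ ‖fderiv ℝ (fderiv ℝ fun z => K z y) x‖ * ‖y‖ ^ ((d : ℝ) + α) ∧
      ‖fderiv ℝ (fderiv ℝ fun z => K z y) x‖ * ‖y‖ ^ ((d : ℝ) + α) ≤ CK

/-- A KPP-type reaction with constants `M`, `mbar`, `Mbar`. -/
structure KPPReaction (d : ℕ) (M mbar Mbar : ℝ) (f : Spc d → ℝ → ℝ) : Prop where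
  per : ∀ s : ℝ, Per1 fun x => f x s
  anti : ∀ x : Spc d, StrictAntiOn (fun s => f x s / s) (Set.Ioi 0)
  zero : ∀ x, f x 0 = 0
  M_pos : 0 < M
  nonpos : ∀ x s, M ≤ s → f x s ≤ 0
  diff0 : ∀ x, DifferentiableAt ℝ (f x) 0
  mbar_pos : 0 < mbar
  Mbar_pos : 0 < Mbar
  kpp : ∀ (x : Spc d) (s : ℝ), 0 ≤ s →
    mbar * s ^ 2 ≤ deriv (f x) 0 * s - f x s ∧ deriv (f x) 0 * s - f x s ≤ Mbar * s ^ 2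

/-- The principal-eigenvalue assumption: `λ₁ < 0` and a bounded 1-periodic `g` with
`L^α[e^g] - μ e^g = λ₁ e^g`, where `μ x = ∂_u f(x,0)`. -/
def PrincipalEigen {d : ℕ} (K : Spc d → Spc d → ℝ) (f : Spc d → ℝ → ℝ)
    (lam1 : ℝ) (g : Spc d → ℝ) : Prop :=
  lam1 < 0 ∧ Per1 g ∧ (∃ C, ∀ x, |g x| ≤ C) ∧
    ∀ x, Lop K (fun z => Real.exp (g z)) x - deriv (f x) 0 * Real.exp (g x)
      = lam1 * Real.exp (g x)

/-- `u` is a bounded positive classical solution of `u_t + L^α[u] = f(x,u)` with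
initial datum `u₀` pinched between `c₁/(1+|x|^{d+α})` and `c₂/(1+|x|^{d+α})`. -/
structure IsSolution (d : ℕ) (α : ℝ) (K : Spc d → Spc d → ℝ) (f : Spc d → ℝ → ℝ)
    (u : Spc d → ℝ → ℝ) (u0 : Spc d → ℝ) (c1 c2 : ℝ) : Prop where
  bdd : ∃ C, ∀ (x : Spc d) (t : ℝ), 0 ≤ t → u x t ≤ C
  pos : ∀ (x : Spc d) (t : ℝ), 0 ≤ t → 0 < u x t
  eqn : ∀ (x : Spc d) (t : ℝ), 0 ≤ t →
    HasDerivAt (fun s => u x s) (f x (u x t) - Lop K (fun z => u z t) x) t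
  init : ∀ x, u x 0 = u0 x
  u0cont : Continuous u0
  c1_pos : 0 < c1
  c1_le_c2 : c1 ≤ c2
  u0bnd : ∀ x : Spc d, c1 / (1 + ‖x‖ ^ ((d : ℝ) + α)) ≤ u0 x ∧
    u0 x ≤ c2 / (1 + ‖x‖ ^ ((d : ℝ) + α))

/-- The rescaled point `x̂ |x|^{1/ε}`. -/
def scalePt {d : ℕ} (ε : ℝ) (x : Spc d) : Spc d := (‖x‖ ^ (1 / ε - 1)) • x

/-- `v^ε(x,t) = ε log u(x̂|x|^{1/ε}, t/ε)`. -/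
def veps {d : ℕ} (u : Spc d → ℝ → ℝ) (ε : ℝ) (p : Spc d × ℝ) : ℝ :=
  ε * Real.log (u (scalePt ε p.1) (p.2 / ε))

/-- The filter describing `ε → 0⁺` and `(y,s) → (x,t)` with `s ≥ 0`. -/
def relaxFilter {d : ℕ} (p : Spc d × ℝ) : Filter (ℝ × (Spc d × ℝ)) :=
  (𝓝[>] (0 : ℝ)) ×ˢ (𝓝 p.1 ×ˢ 𝓝[Set.Ici (0 : ℝ)] p.2)

/-- The half-relaxed upper limit `v*`. -/
def vupper {d : ℕ} (u : Spc d → ℝ → ℝ) (p : Spc d × ℝ) : ℝ :=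
  Filter.limsup (fun q : ℝ × (Spc d × ℝ) => veps u q.1 q.2) (relaxFilter p)

/-- The half-relaxed lower limit `v_*`. -/
def vlower {d : ℕ} (u : Spc d → ℝ → ℝ) (p : Spc d × ℝ) : ℝ :=
  Filter.liminf (fun q : ℝ × (Spc d × ℝ) => veps u q.1 q.2) (relaxFilter p)

-- USC extreme value theorem
lemma usc_exists_max {X : Type*} [TopologicalSpace X] [FirstCountableTopology X]
    {K : Set X} (hK : IsCompact K) (hne : K.Nonempty) {g : X → ℝ}
    (hg : UpperSemicontinuousOn g K) : ∃ z ∈ K, ∀ w ∈ K, g w ≤ g z := by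
  by_cases hb : BddAbove (g '' K)
  · set S := sSup (g '' K) with hS
    have hne' : (g '' K).Nonempty := hne.image g
    have h1 : ∀ n : ℕ, ∃ p ∈ K, S - 1 / (n + 1) < g p := by
      intro n
      have hlt : S - 1 / (n + 1) < S := by
        have : (0:ℝ) < 1 / (n + 1) := by positivity
        linarith
      obtain ⟨y, hy, hy2⟩ := exists_lt_of_lt_csSup hne' hlt
      obtain ⟨p, hp, rfl⟩ := hy
      exact ⟨p, hp, hy2⟩
    choose u hu hgu using h1
    obtain ⟨a, ha, φ, hφ, hconv⟩ := hK.tendsto_subseq hu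
    refine ⟨a, ha, fun w hw => ?_⟩
    have hwS : g w ≤ S := le_csSup hb ⟨w, hw, rfl⟩
    have haS : S ≤ g a := by
      by_contra hcon
      push_neg at hcon
      set y := (g a + S) / 2 with hy
      have h2 : ∀ᶠ z in 𝓝[K] a, g z < y := hg a ha y (by simp [hy]; linarith)
      have htend : Tendsto (fun n => u (φ n)) atTop (𝓝[K] a) := by
        refine tendsto_nhdsWithin_of_tendsto_nhds_of_eventually_within _ hconv ?_
        exact Eventually.of_forall fun n => hu _
      have h3 : ∀ᶠ n in atTop, g (u (φ n)) < y := htend.eventually h2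
      have h4 : Tendsto (fun n : ℕ => S - 1 / (φ n + 1)) atTop (𝓝 S) := by
        have : Tendsto (fun n : ℕ => 1 / ((φ n : ℝ) + 1)) atTop (𝓝 0) := by
          apply tendsto_one_div_add_atTop_nhds_zero_nat.comp
          exact hφ.tendsto_atTop
        simpa using (tendsto_const_nhds (x := S)).sub this
      have h5 : ∀ᶠ n in atTop, y < S - 1 / (φ n + 1) := by
        apply (tendsto_order.1 h4).1
        simp [hy]; linarith
      obtain ⟨n, h3n, h5n⟩ := (h3.and h5).exists
      exact absurd (hgu (φ n)) (by push_neg; linarith)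
    exact hwS.trans haS
  · exfalso
    have h1 : ∀ n : ℕ, ∃ p ∈ K, (n : ℝ) ≤ g p := by
      intro n
      rw [bddAbove_def] at hb
      push_neg at hb
      obtain ⟨y, hy, hy2⟩ := hb n
      obtain ⟨p, hp, rfl⟩ := hy
      exact ⟨p, hp, hy2.le⟩
    choose u hu hgu using h1
    obtain ⟨a, ha, φ, hφ, hconv⟩ := hK.tendsto_subseq hu
    have h2 : ∀ᶠ z in 𝓝[K] a, g z < g a + 1 := hg a ha (g a + 1) (lt_add_one _)
    have htend : Tendsto (fun n => u (φ n)) atTop (𝓝[K] a) :=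
      tendsto_nhdsWithin_of_tendsto_nhds_of_eventually_within _ hconv
        (Eventually.of_forall fun n => hu _)
    have h3 : ∀ᶠ n in atTop, g (u (φ n)) < g a + 1 := htend.eventually h2
    have h5 : ∀ᶠ n : ℕ in atTop, g a + 1 ≤ (n : ℝ) := by
      have := tendsto_natCast_atTop_atTop (R := ℝ)
      exact this.eventually_ge_atTop _
    obtain ⟨n, h3n, h5n⟩ := (h3.and h5).exists
    have : (n : ℝ) ≤ (φ n : ℝ) := by exact_mod_cast Nat.cast_le.2 (hφ.le_apply)
    have := hgu (φ n)
    linarith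
lemma maxsq_hasDerivAt (c x : ℝ) :
    HasDerivAt (fun t => max (t - c) 0 ^ 2) (2 * max (x - c) 0) x := by
  rcases lt_trichotomy x c with h | h | h
  · have : max (x - c) 0 = 0 := max_eq_right (by linarith)
    rw [this, mul_zero]
    apply (hasDerivAt_const x (0:ℝ)).congr_of_eventuallyEq
    filter_upwards [Iio_mem_nhds h] with t ht
    rw [max_eq_right (by simp at ht; linarith), zero_pow (by norm_num)]
  · subst h
    have hmax : max (x - x) (0:ℝ) = 0 := by simp
    rw [hmax, mul_zero]
    rw [hasDerivAt_iff_isLittleO]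
    rw [Asymptotics.isLittleO_iff]
    intro ε hε
    filter_upwards [Metric.ball_mem_nhds x hε] with t ht
    rw [Metric.mem_ball, Real.dist_eq] at ht
    have h1 : max (t - x) 0 ≤ |t - x| := max_le (le_abs_self _) (abs_nonneg _)
    have h2 : 0 ≤ max (t - x) 0 := le_max_right _ _
    have h0 : max (x - x) (0:ℝ) ^ 2 = 0 := by simp
    simp only [smul_eq_mul, mul_zero, sub_zero, h0]
    rw [Real.norm_eq_abs, Real.norm_eq_abs,
      abs_of_nonneg (by positivity : (0:ℝ) ≤ max (t - x) 0 ^ 2)]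
    calc max (t - x) 0 ^ 2 ≤ |t - x| * |t - x| := by nlinarith
    _ ≤ ε * |t - x| := by nlinarith [abs_nonneg (t - x)]
  · have : max (x - c) 0 = x - c := max_eq_left (by linarith)
    rw [this]
    have hd : HasDerivAt (fun t : ℝ => (t - c) ^ 2) (2 * (x - c)) x := by
      have := ((hasDerivAt_id x).sub_const c).fun_pow 2
      simpa using this
    apply hd.congr_of_eventuallyEq
    filter_upwards [Ioi_mem_nhds h] with t ht
    rw [max_eq_left (by simp at ht; linarith)]

lemma maxsq_contDiff (c : ℝ) : ContDiff ℝ 1 (fun t : ℝ => max (t - c) 0 ^ 2) := by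
  rw [contDiff_one_iff_deriv]
  have hderiv : deriv (fun t : ℝ => max (t - c) 0 ^ 2) = fun x => 2 * max (x - c) 0 :=
    funext fun x => (maxsq_hasDerivAt c x).deriv
  constructor
  · exact fun x => (maxsq_hasDerivAt c x).differentiableAt
  · rw [hderiv]
    exact continuous_const.mul ((continuous_id.sub continuous_const).max continuous_const)

lemma sub_one_le_maxsq (s : ℝ) : s - 1 ≤ max s 0 ^ 2 := by
  rcases le_total s 0 with h | h
  · rw [max_eq_right h]; nlinarith
  · rw [max_eq_left h]; nlinarith

lemma key_half (d : ℕ) (U : Set (Spc d)) (hU : IsOpen U)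
    (F : Spc d → ℝ → ℝ) (C : ℝ) (hC : 0 < C)
    (hFusc : UpperSemicontinuousOn (fun p : Spc d × ℝ => F p.1 p.2) (U ×ˢ Set.Ici (0 : ℝ)))
    (hFbd : ∀ x ∈ U, ∀ t : ℝ, 0 ≤ t → F x t ≤ C * t)
    (hFvisc : ∀ x₀ ∈ U, ∀ t₀ : ℝ, 0 < t₀ → ∀ ψ : Spc d × ℝ → ℝ,
      (∃ V ∈ 𝓝 ((x₀, t₀) : Spc d × ℝ), ContDiffOn ℝ 1 ψ V) →
      (∀ x ∈ U, ∀ t : ℝ, 0 ≤ t → F x t - ψ (x, t) ≤ 0) →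
      F x₀ t₀ - ψ (x₀, t₀) = 0 →
      F x₀ t₀ ≤ 0 ∨ deriv (fun s => ψ (x₀, s)) t₀ ≤ 0) :
    ∀ x ∈ U, ∀ t : ℝ, 0 ≤ t → F x t ≤ 0 := by
  intro x₀ hx₀ t₀ ht₀
  rcases ht₀.eq_or_lt with h0 | ht₀pos
  · have := hFbd x₀ hx₀ t₀ ht₀
    rw [← h0] at this ⊢
    simpa using this
  by_contra hcon
  push_neg at hcon
  set a := F x₀ t₀ with ha_def
  have haC : a ≤ C * t₀ := hFbd x₀ hx₀ t₀ ht₀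
  set m := a / (2 * t₀) with hm_def
  have hm : 0 < m := div_pos hcon (by linarith)
  have hmC : m ≤ C / 2 := by
    rw [hm_def, div_le_div_iff₀ (by linarith) (by norm_num)]
    linarith
  set c := C + 1 - m with hc_def
  have hc1 : 1 ≤ c := by rw [hc_def]; linarith
  have hcpos : 0 < c := by linarith
  set T := c * (t₀ + 1) with hT_def
  have hTt₀ : t₀ ≤ T := by nlinarith
  have hT0 : 0 < T := lt_of_lt_of_le ht₀pos hTt₀
  obtain ⟨r, hr, hball⟩ : ∃ r > 0, Metric.closedBall x₀ r ⊆ U := by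
    rcases Metric.isOpen_iff.1 hU x₀ hx₀ with ⟨ε, hε, hb⟩
    exact ⟨ε / 2, by linarith, (Metric.closedBall_subset_ball (by linarith)).trans hb⟩
  set A := (C * T + a) / r ^ 2 with hA_def
  have hA : 0 < A := by positivity
  have hAr : A * r ^ 2 = C * T + a := by
    rw [hA_def]; field_simp
  set ψ₀ : Spc d × ℝ → ℝ :=
    fun p => m * p.2 + c * max (p.2 - t₀) 0 ^ 2 + A * ‖p.1 - x₀‖ ^ 2 with hψ₀
  have hψ₀nn : ∀ x : Spc d, ∀ t : ℝ, 0 ≤ t → 0 ≤ ψ₀ (x, t) := by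
    intro x t ht
    have h1 : 0 ≤ max (t - t₀) 0 ^ 2 := by positivity
    have h2 : 0 ≤ ‖x - x₀‖ ^ 2 := by positivity
    simp only [hψ₀]
    have := mul_nonneg hm.le ht
    have := mul_nonneg hcpos.le h1
    have := mul_nonneg hA.le h2
    linarith
  set K : Set (Spc d × ℝ) := Metric.closedBall x₀ r ×ˢ Set.Icc 0 T with hK
  have hKc : IsCompact K := (isCompact_closedBall x₀ r).prod isCompact_Icc
  have hx₀K : ((x₀, t₀) : Spc d × ℝ) ∈ K := by
    rw [hK, Set.mem_prod]
    exact ⟨Metric.mem_closedBall_self hr.le, ht₀, hTt₀⟩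
  have hKne : K.Nonempty := ⟨(x₀, t₀), hx₀K⟩
  have hKsub : K ⊆ U ×ˢ Set.Ici (0 : ℝ) := by
    rintro ⟨x, t⟩ hxt
    rw [hK, Set.mem_prod] at hxt
    exact ⟨hball hxt.1, hxt.2.1⟩
  have hψ₀cont : Continuous ψ₀ := by
    rw [hψ₀]
    apply ((continuous_const.mul continuous_snd).add
      (continuous_const.mul (((continuous_snd.sub continuous_const).max
        continuous_const).pow 2))).add
    exact continuous_const.mul ((continuous_fst.sub continuous_const).norm.pow 2)
  have husc : UpperSemicontinuousOn (fun p : Spc d × ℝ => F p.1 p.2 + -ψ₀ p) K :=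
    (hFusc.mono hKsub).add
      (hψ₀cont.neg.continuousOn.upperSemicontinuousOn)
  obtain ⟨⟨x₁, t₁⟩, hz, hmax⟩ := usc_exists_max hKc hKne husc
  rw [hK, Set.mem_prod] at hz
  set S := F x₁ t₁ + -ψ₀ (x₁, t₁) with hSdef
  have hψ₀x₀ : ψ₀ (x₀, t₀) = m * t₀ := by
    simp [hψ₀]
  have hmt₀ : m * t₀ = a / 2 := by
    rw [hm_def]; field_simp
  have hS2 : a / 2 ≤ S := by
    have := hmax (x₀, t₀) hx₀K
    simp only [hψ₀x₀, hmt₀] at this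
    rw [← ha_def] at this
    linarith
  have hSpos : 0 < S := by linarith
  -- global bound
  have hglob : ∀ x ∈ U, ∀ t : ℝ, 0 ≤ t → F x t - (ψ₀ (x, t) + S) ≤ 0 := by
    intro x hx t ht
    by_cases hxt : ((x, t) : Spc d × ℝ) ∈ K
    · have := hmax (x, t) hxt
      dsimp only at this
      linarith
    · have hFle := hFbd x hx t ht
      have hq : 0 ≤ max (t - t₀) 0 ^ 2 := by positivity
      have hqc : 0 ≤ c * max (t - t₀) 0 ^ 2 := mul_nonneg hcpos.le hq
      have hmn : 0 ≤ m * t := mul_nonneg hm.le ht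
      have hAn : 0 ≤ A * ‖x - x₀‖ ^ 2 := mul_nonneg hA.le (by positivity)
      rcases le_or_gt t T with hta | hta
      · have hxball : ¬ x ∈ Metric.closedBall x₀ r := by
          intro hmem
          exact hxt (by rw [hK, Set.mem_prod]; exact ⟨hmem, ht, hta⟩)
        rw [Metric.mem_closedBall, not_le, dist_eq_norm] at hxball
        have hr2 : A * r ^ 2 ≤ A * ‖x - x₀‖ ^ 2 :=
          mul_le_mul_of_nonneg_left
            (pow_le_pow_left₀ hr.le hxball.le 2) hA.le
        have hCt : C * t ≤ C * T := mul_le_mul_of_nonneg_left hta hC.le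
        simp only [hψ₀]
        rw [hAr] at hr2
        linarith
      · have h1 : (t - t₀) - 1 ≤ max (t - t₀) 0 ^ 2 := sub_one_le_maxsq _
        have h2 : c * ((t - t₀) - 1) ≤ c * max (t - t₀) 0 ^ 2 :=
          mul_le_mul_of_nonneg_left h1 hcpos.le
        have h3 : m * t + c * ((t - t₀) - 1) = (C + 1) * t - T := by
          rw [hc_def, hT_def, hc_def]; ring
        have h4 : C * t ≤ (C + 1) * t - T := by nlinarith
        simp only [hψ₀]
        linarith
  -- max point properties
  have hx₁U : x₁ ∈ U := hball hz.1
  have ht₁pos : 0 < t₁ := by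
    rcases hz.2.1.eq_or_lt with h10 | h1pos
    · exfalso
      have hF0 : F x₁ t₁ ≤ 0 := by
        have h10' : t₁ = 0 := h10.symm
        have := hFbd x₁ hx₁U t₁ hz.2.1
        rw [h10'] at this ⊢
        simpa using this
      have := hψ₀nn x₁ t₁ hz.2.1
      have : S ≤ 0 := by rw [hSdef]; linarith
      linarith
    · exact h1pos
  -- apply viscosity
  set ψ : Spc d × ℝ → ℝ := fun p => ψ₀ p + S with hψ
  have hψC : ContDiff ℝ 1 ψ := by
    rw [hψ, hψ₀]
    apply ContDiff.add _ contDiff_const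
    apply ContDiff.add
    apply ContDiff.add
    · exact contDiff_const.mul contDiff_snd
    · exact contDiff_const.mul ((maxsq_contDiff t₀).comp contDiff_snd)
    · exact contDiff_const.mul
        ((contDiff_norm_sq ℝ).comp (contDiff_fst.sub contDiff_const))
  have hvisc := hFvisc x₁ hx₁U t₁ ht₁pos ψ
    ⟨Set.univ, Filter.univ_mem, hψC.contDiffOn⟩
    (fun x hx t ht => hglob x hx t ht)
    (by show F x₁ t₁ - (ψ₀ (x₁, t₁) + S) = 0; rw [hSdef]; ring)
  rcases hvisc with h | h
  · have := hψ₀nn x₁ t₁ hz.2.1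
    have : S ≤ 0 := by rw [hSdef]; linarith
    linarith
  · have hde : deriv (fun s => ψ (x₁, s)) t₁ = m + c * (2 * max (t₁ - t₀) 0) := by
      have heq : (fun s => ψ (x₁, s))
          = fun s => m * s + c * max (s - t₀) 0 ^ 2 + A * ‖x₁ - x₀‖ ^ 2 + S := by
        funext s; simp only [hψ, hψ₀]
      rw [heq]
      have h1 : HasDerivAt (fun s : ℝ => m * s) m t₁ := by
        simpa using (hasDerivAt_id t₁).const_mul m
      have h2 : HasDerivAt (fun s : ℝ => c * max (s - t₀) 0 ^ 2)
          (c * (2 * max (t₁ - t₀) 0)) t₁ := (maxsq_hasDerivAt t₀ t₁).const_mul c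
      have h3 := ((h1.add h2).add_const (A * ‖x₁ - x₀‖ ^ 2)).add_const S
      simpa using h3.deriv
    rw [hde] at h
    have hmaxnn : (0:ℝ) ≤ max (t₁ - t₀) 0 := le_max_right _ _
    have : 0 ≤ c * (2 * max (t₁ - t₀) 0) := by positivity
    linarith

/-- If `F` is upper semicontinuous and `G` lower semicontinuous on
`U × [0,∞)`, `F(x,t) ≤ Ct`, `G(x,t) ≥ −Ct`, and `min(F_t,F) ≤ 0`, `max(G_t,G) ≥ 0` hold in
the viscosity sense on `U × (0,∞)`, then `F ≤ 0` and `G ≥ 0` on `U × [0,∞)`. -/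
theorem statement4 (d : ℕ) (hd : 1 ≤ d) (U : Set (Spc d)) (hU : IsOpen U)
    (F G : Spc d → ℝ → ℝ) (C : ℝ) (hC : 0 < C)
    (hFusc : UpperSemicontinuousOn (fun p : Spc d × ℝ => F p.1 p.2) (U ×ˢ Set.Ici (0 : ℝ)))
    (hGlsc : LowerSemicontinuousOn (fun p : Spc d × ℝ => G p.1 p.2) (U ×ˢ Set.Ici (0 : ℝ)))
    (hFbd : ∀ x ∈ U, ∀ t : ℝ, 0 ≤ t → F x t ≤ C * t)
    (hGbd : ∀ x ∈ U, ∀ t : ℝ, 0 ≤ t → -(C * t) ≤ G x t)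
    (hFvisc : ∀ x₀ ∈ U, ∀ t₀ : ℝ, 0 < t₀ → ∀ ψ : Spc d × ℝ → ℝ,
      (∃ V ∈ 𝓝 ((x₀, t₀) : Spc d × ℝ), ContDiffOn ℝ 1 ψ V) →
      (∀ x ∈ U, ∀ t : ℝ, 0 ≤ t → F x t - ψ (x, t) ≤ 0) →
      F x₀ t₀ - ψ (x₀, t₀) = 0 →
      F x₀ t₀ ≤ 0 ∨ deriv (fun s => ψ (x₀, s)) t₀ ≤ 0)
    (hGvisc : ∀ x₀ ∈ U, ∀ t₀ : ℝ, 0 < t₀ → ∀ ψ : Spc d × ℝ → ℝ,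
      (∃ V ∈ 𝓝 ((x₀, t₀) : Spc d × ℝ), ContDiffOn ℝ 1 ψ V) →
      (∀ x ∈ U, ∀ t : ℝ, 0 ≤ t → 0 ≤ G x t - ψ (x, t)) →
      G x₀ t₀ - ψ (x₀, t₀) = 0 →
      0 ≤ G x₀ t₀ ∨ 0 ≤ deriv (fun s => ψ (x₀, s)) t₀) :
    (∀ x ∈ U, ∀ t : ℝ, 0 ≤ t → F x t ≤ 0) ∧
      (∀ x ∈ U, ∀ t : ℝ, 0 ≤ t → 0 ≤ G x t) := by

  have keyF := key_half d U hU F C hC hFusc hFbd hFvisc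
  have hGusc : UpperSemicontinuousOn (fun p : Spc d × ℝ => -(G p.1 p.2))
      (U ×ˢ Set.Ici (0 : ℝ)) := by
    intro p hp y hy
    have := hGlsc p hp (-y) (by dsimp only at hy ⊢; linarith)
    filter_upwards [this] with z hz
    show -(G z.1 z.2) < y
    linarith
  have hGvisc' : ∀ x₀ ∈ U, ∀ t₀ : ℝ, 0 < t₀ → ∀ ψ : Spc d × ℝ → ℝ,
      (∃ V ∈ 𝓝 ((x₀, t₀) : Spc d × ℝ), ContDiffOn ℝ 1 ψ V) →
      (∀ x ∈ U, ∀ t : ℝ, 0 ≤ t → -(G x t) - ψ (x, t) ≤ 0) →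
      -(G x₀ t₀) - ψ (x₀, t₀) = 0 →
      -(G x₀ t₀) ≤ 0 ∨ deriv (fun s => ψ (x₀, s)) t₀ ≤ 0 := by
    intro x₀ hx₀ t₀ ht₀ ψ hsm hg he
    obtain ⟨V, hV, hψV⟩ := hsm
    rcases hGvisc x₀ hx₀ t₀ ht₀ (fun p => -ψ p) ⟨V, hV, hψV.neg⟩
      (fun x hx t ht => by have := hg x hx t ht; linarith)
      (by linarith) with h | h
    · left; linarith
    · right
      have hdn : deriv (fun s => -ψ (x₀, s)) t₀ = -deriv (fun s => ψ (x₀, s)) t₀ :=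
        deriv.fun_neg
      rw [hdn] at h
      linarith
  have keyG := key_half d U hU (fun x t => -(G x t)) C hC hGusc
    (fun x hx t ht => by have := hGbd x hx t ht; linarith)
    hGvisc'
  refine ⟨keyF, fun x hx t ht => ?_⟩
  have h : -G x t ≤ 0 := keyG x hx t ht
  linarith
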